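/- Let θ_0,...,θ_K ∈ ℝ^D each be strictly increasing in coordinates, with δ := min over k and i of (θ_{k,i+1} - θ_{k,i}) > 0. Let ε := δ/3. Then any θ ∈ ℝ^D within Euclidean distance ε of some Bézier curve point b(t) (t ∈ [0,1]) satisfies θ_i < θ_{i+1} for all i = 1,...,D-1. -/

import Mathlib

private lemma coord_abs_le_norm {D : ℕ} (x : EuclideanSpace ℝ (Fin D)) (i : Fin D) :
    |x i| ≤ ‖x‖ := by
  rw [EuclideanSpace.norm_eq]
  have h1 : |x i| = Real.sqrt (‖x i‖ ^ 2) := by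
    rw [Real.sqrt_sq_eq_abs, Real.norm_eq_abs, abs_abs]
  rw [h1]
  apply Real.sqrt_le_sqrt
  exact Finset.single_le_sum (f := fun j => ‖x j‖ ^ 2) (fun j _ => sq_nonneg _) (Finset.mem_univ i)

private lemma bern_sum (K : ℕ) (t : ℝ) :
    ∑ k : Fin (K + 1), (K.choose (k : ℕ) : ℝ) * (1 - t) ^ (K - (k : ℕ)) * t ^ (k : ℕ) = 1 := by
  have h := bernsteinPolynomial.sum ℝ K
  have h2 := congrArg (Polynomial.eval t) h
  simp only [Polynomial.eval_finset_sum, Polynomial.eval_one] at h2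
  rw [Finset.sum_range] at h2
  calc ∑ k : Fin (K + 1), (K.choose (k : ℕ) : ℝ) * (1 - t) ^ (K - (k : ℕ)) * t ^ (k : ℕ)
      = ∑ k : Fin (K + 1), Polynomial.eval t (bernsteinPolynomial ℝ K (k : ℕ)) := by
        apply Finset.sum_congr rfl
        intro k _
        simp only [bernsteinPolynomial, Polynomial.eval_mul, Polynomial.eval_pow,
          Polynomial.eval_natCast, Polynomial.eval_sub, Polynomial.eval_one, Polynomial.eval_X]
        ring
    _ = 1 := h2

theorem tube_strictly_increasing
    (K D : ℕ) (θ : Fin (K + 1) → EuclideanSpace ℝ (Fin D))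
    (δ : ℝ) (hδpos : 0 < δ)
    (hδ : ∀ k : Fin (K + 1), ∀ i : ℕ, ∀ hi : i + 1 < D,
      δ ≤ θ k ⟨i + 1, hi⟩ - θ k ⟨i, Nat.lt_of_succ_lt hi⟩)
    (ε : ℝ) (hε : ε = δ / 3)
    (v : EuclideanSpace ℝ (Fin D))
    (hv : ∃ t ∈ Set.Icc (0:ℝ) 1,
      ‖(∑ k : Fin (K + 1),
          ((K.choose k : ℝ) * (1 - t) ^ (K - (k : ℕ)) * t ^ (k : ℕ)) • θ k) - v‖ < ε) :
    ∀ i : ℕ, ∀ hi : i + 1 < D, v ⟨i, Nat.lt_of_succ_lt hi⟩ < v ⟨i + 1, hi⟩ := by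
  obtain ⟨t, ⟨ht0, ht1⟩, hnorm⟩ := hv
  intro i hi
  set c : Fin (K + 1) → ℝ := fun k => (K.choose (k : ℕ) : ℝ) * (1 - t) ^ (K - (k : ℕ)) * t ^ (k : ℕ)
  set b : EuclideanSpace ℝ (Fin D) := ∑ k : Fin (K + 1), c k • θ k
  have hc_nonneg : ∀ k : Fin (K + 1), 0 ≤ c k := fun k =>
    mul_nonneg (mul_nonneg (Nat.cast_nonneg _) (pow_nonneg (by linarith) _))
      (pow_nonneg ht0 _)
  have hc_sum : ∑ k : Fin (K + 1), c k = 1 := bern_sum K t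
  set i0 : Fin D := ⟨i, Nat.lt_of_succ_lt hi⟩
  set i1 : Fin D := ⟨i + 1, hi⟩
  -- coordinates of b
  have hb : ∀ j : Fin D, b j = ∑ k : Fin (K + 1), c k * θ k j := by
    intro j
    show (∑ k : Fin (K + 1), c k • θ k) j = _
    rw [WithLp.ofLp_sum, Finset.sum_apply]
    rfl
  have hgap : δ ≤ b i1 - b i0 := by
    rw [hb, hb, ← Finset.sum_sub_distrib]
    calc δ = ∑ k : Fin (K + 1), c k * δ := by
              rw [← Finset.sum_mul, hc_sum, one_mul]
      _ ≤ ∑ k : Fin (K + 1), (c k * θ k i1 - c k * θ k i0) := by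
          apply Finset.sum_le_sum
          intro k _
          rw [← mul_sub]
          exact mul_le_mul_of_nonneg_left (hδ k i hi) (hc_nonneg k)
  have h0 : |(b - v) i0| ≤ ‖b - v‖ := coord_abs_le_norm _ _
  have h1 : |(b - v) i1| ≤ ‖b - v‖ := coord_abs_le_norm _ _
  have e0 : (b - v) i0 = b i0 - v i0 := rfl
  have e1 : (b - v) i1 = b i1 - v i1 := rfl
  rw [e0] at h0
  rw [e1] at h1
  have hb0 := abs_le.mp h0
  have hb1 := abs_le.mp h1
  have hε3 : ‖b - v‖ < δ / 3 := by rw [hε] at hnorm; exact hnorm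
  have := hb0.1
  have := hb1.2
  show v i0 < v i1
  linarith
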